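/- (Carleson embedding theorem) Let $\mu$ be a locally finite positive measure on $\mathbb{R}^d$ and $\{a_I\}_{I\in\mathcal{D}}$ nonnegative numbers indexed by dyadic cubes satisfying the Carleson condition $\sum_{I'\subset I, I'\in\mathcal{D}} a_{I'} \le C\,\mu(I)$ for all $I\in\mathcal{D}$. Then for every $\varphi\in L^2(\mu)$, $\sum_{I\in\mathcal{D}} |\langle\varphi\rangle_{\mu,I}|^2 a_I \le 4C\|\varphi\|_{L^2(\mu)}^2$, where $\langle\varphi\rangle_{\mu,I} = \frac{1}{\mu(I)}\int_I\varphi\,d\mu$ (terms with $\mu(I)=0$ are omitted). -/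

import Mathlib

open MeasureTheory Set
open scoped ENNReal
noncomputable section

/-- Points of `ℝ^d`. -/
abbrev Rd (d : ℕ) := Fin d → ℝ

/-- The half-open axis-parallel cube with lower-left corner `a` and side length `ℓ`. -/
def hcube {d : ℕ} (a : Rd d) (ℓ : ℝ) : Set (Rd d) := {x | ∀ i, a i ≤ x i ∧ x i < a i + ℓ}

/-- The (half-open) dyadic cube `∏ [k_i 2^n, (k_i+1) 2^n)`. -/
def dyC {d : ℕ} (n : ℤ) (k : Fin d → ℤ) : Set (Rd d) :=
  hcube (fun i => (k i : ℝ) * 2 ^ n) ((2 : ℝ) ^ n)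

set_option linter.unusedVariables false
set_option linter.unnecessarySimpa false


lemma measurableSet_dyC {d : ℕ} (n : ℤ) (k : Fin d → ℤ) : MeasurableSet (dyC n k) := by
  have : dyC n k = ⋂ i, (fun x : Rd d => x i) ⁻¹' (Set.Ico ((k i : ℝ) * 2 ^ n) ((k i : ℝ) * 2 ^ n + 2 ^ n)) := by
    ext x; simp [dyC, hcube, Set.mem_Ico]
  rw [this]
  exact MeasurableSet.iInter fun i => (measurable_pi_apply i) measurableSet_Ico

lemma dyC_subset_Icc {d : ℕ} (n : ℤ) (k : Fin d → ℤ) :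
    dyC n k ⊆ Set.Icc (fun i => (k i : ℝ) * 2 ^ n) (fun i => (k i : ℝ) * 2 ^ n + 2 ^ n) := by
  intro x hx
  constructor <;> intro i
  · exact (hx i).1
  · exact le_of_lt (hx i).2

lemma measure_dyC_lt_top {d : ℕ} (μ : Measure (Rd d)) [IsLocallyFiniteMeasure μ]
    (n : ℤ) (k : Fin d → ℤ) : μ (dyC n k) < ∞ :=
  lt_of_le_of_lt (measure_mono (dyC_subset_Icc n k)) (isCompact_Icc.measure_lt_top)

/-- 1-d nesting -/
lemma Ico_nested {n m : ℤ} {k l : ℤ} (h : n ≤ m) {x : ℝ}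
    (h1 : (k : ℝ) * 2 ^ n ≤ x ∧ x < k * 2 ^ n + 2 ^ n)
    (h2 : (l : ℝ) * 2 ^ m ≤ x ∧ x < l * 2 ^ m + 2 ^ m) :
    (l : ℝ) * 2 ^ m ≤ (k : ℝ) * 2 ^ n ∧ (k : ℝ) * 2 ^ n + 2 ^ n ≤ (l : ℝ) * 2 ^ m + 2 ^ m := by
  have hp : (0:ℝ) < 2 ^ n := by positivity
  set M : ℤ := 2 ^ (m - n).toNat with hM
  have hMr : (2:ℝ) ^ m = (M : ℝ) * 2 ^ n := by
    rw [hM]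
    push_cast
    rw [← zpow_natCast (2:ℝ) (m - n).toNat, Int.toNat_of_nonneg (by omega), ← zpow_add₀ (by norm_num : (2:ℝ) ≠ 0)]
    ring_nf
  rw [hMr] at h2
  -- from overlap: k*2^n < (l+1)*2^m and l*2^m < (k+1)*2^n
  have o1 : (k : ℝ) * 2 ^ n < ((l + 1) * M : ℤ) * 2 ^ n := by
    push_cast
    nlinarith [h1.1, h2.2]
  have o2 : ((l * M : ℤ) : ℝ) * 2 ^ n < ((k + 1 : ℤ) : ℝ) * 2 ^ n := by
    push_cast
    nlinarith [h2.1, h1.2]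
  have i1 : k < (l + 1) * M := by
    have := lt_of_mul_lt_mul_right o1 hp.le
    exact_mod_cast this
  have i2 : l * M < k + 1 := by
    have := lt_of_mul_lt_mul_right o2 hp.le
    exact_mod_cast this
  have i1' : k + 1 ≤ (l + 1) * M := by omega
  have i2' : l * M ≤ k := by omega
  have j1 : ((l * M : ℤ) : ℝ) ≤ (k : ℝ) := by exact_mod_cast i2'
  have j2 : ((k + 1 : ℤ) : ℝ) ≤ (((l+1) * M : ℤ) : ℝ) := by exact_mod_cast i1'
  push_cast at j1 j2
  rw [hMr]
  constructor
  · nlinarith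
  · nlinarith

lemma dyC_nested {d : ℕ} {n m : ℤ} {k l : Fin d → ℤ} (h : n ≤ m)
    (hne : (dyC n k ∩ dyC m l).Nonempty) : dyC n k ⊆ dyC m l := by
  obtain ⟨x, hx1, hx2⟩ := hne
  intro y hy i
  obtain ⟨c1, c2⟩ := Ico_nested h (hx1 i) (hx2 i)
  have hyi1 : (k i : ℝ) * 2 ^ n ≤ y i := (hy i).1
  have hyi2 : y i < (k i : ℝ) * 2 ^ n + 2 ^ n := (hy i).2
  exact ⟨by show (l i : ℝ) * 2 ^ m ≤ y i; linarith,
    by show y i < (l i : ℝ) * 2 ^ m + 2 ^ m; linarith⟩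


lemma meas_setof_lt (b : ℝ≥0∞) :
    (volume.restrict (Ioi (0:ℝ))) {t : ℝ | ENNReal.ofReal t < b} = b := by
  rw [Measure.restrict_apply]
  · rcases eq_or_ne b ∞ with hb | hb
    · have : {t : ℝ | ENNReal.ofReal t < b} ∩ Ioi 0 = Ioi 0 := by
        ext t; simp [hb, ENNReal.ofReal_lt_top]
      rw [this, hb]
      simp [Real.volume_Ioi]
    · have : {t : ℝ | ENNReal.ofReal t < b} ∩ Ioi 0 = Ioo 0 b.toReal := by
        ext t
        simp only [mem_inter_iff, mem_setOf_eq, mem_Ioi, mem_Ioo]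
        constructor
        · rintro ⟨h1, h2⟩
          exact ⟨h2, (ENNReal.ofReal_lt_iff_lt_toReal (le_of_lt h2) hb).mp h1⟩
        · rintro ⟨h1, h2⟩
          exact ⟨(ENNReal.ofReal_lt_iff_lt_toReal (le_of_lt h1) hb).mpr h2, h1⟩
      rw [this, Real.volume_Ioo, ENNReal.ofReal_sub _ (le_refl 0)]
      simp [ENNReal.ofReal_toReal hb]
  · exact measurableSet_lt (ENNReal.measurable_ofReal) measurable_const

lemma measurableSet_setof_lt (b : ℝ≥0∞) : MeasurableSet {t : ℝ | ENNReal.ofReal t < b} :=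
  measurableSet_lt (ENNReal.measurable_ofReal) measurable_const

lemma sq_eq_two_lintegral (c : ℝ≥0∞) (hc : c ≠ ∞) :
    c ^ 2 = 2 * ∫⁻ t in Ioi (0:ℝ),
      ({t : ℝ | ENNReal.ofReal t < c}.indicator ENNReal.ofReal) t := by
  rw [lintegral_indicator (measurableSet_setof_lt c)]
  rw [Measure.restrict_restrict (measurableSet_setof_lt c)]
  have hseteq : {t : ℝ | ENNReal.ofReal t < c} ∩ Ioi 0 = Ioo 0 c.toReal := by
    ext t
    simp only [mem_inter_iff, mem_setOf_eq, mem_Ioi, mem_Ioo]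
    constructor
    · rintro ⟨h1, h2⟩
      exact ⟨h2, (ENNReal.ofReal_lt_iff_lt_toReal (le_of_lt h2) hc).mp h1⟩
    · rintro ⟨h1, h2⟩
      exact ⟨(ENNReal.ofReal_lt_iff_lt_toReal (le_of_lt h1) hc).mpr h2, h1⟩
  rw [hseteq]
  set r := c.toReal with hr
  have hr0 : 0 ≤ r := ENNReal.toReal_nonneg
  have hint : IntegrableOn (fun t : ℝ => t) (Ioo 0 r) volume := by
    have : IntegrableOn (fun t : ℝ => t) (Icc 0 r) volume :=
      (continuous_id.continuousOn).integrableOn_compact isCompact_Icc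
    exact this.mono_set Ioo_subset_Icc_self
  have hpos : 0 ≤ᵐ[volume.restrict (Ioo (0:ℝ) r)] fun t : ℝ => t := by
    filter_upwards [ae_restrict_mem measurableSet_Ioo] with t ht
    exact le_of_lt ht.1
  rw [← ofReal_integral_eq_lintegral_ofReal hint hpos]
  have : (∫ t in Ioo (0:ℝ) r, t) = r ^ 2 / 2 := by
    rw [← integral_Ioc_eq_integral_Ioo, ← intervalIntegral.integral_of_le hr0]
    rw [integral_id]
    ring
  rw [this]
  rw [← ENNReal.ofReal_ofNat 2, ← ENNReal.ofReal_mul (by norm_num)]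
  rw [show (2:ℝ) * (r ^ 2 / 2) = r ^ 2 by ring]
  rw [ENNReal.ofReal_pow hr0]
  rw [hr, ENNReal.ofReal_toReal hc]


lemma avg_mul_measure_le {d : ℕ} (μ : Measure (Rd d)) [IsLocallyFiniteMeasure μ]
    (g : Rd d → ℝ≥0∞) (n : ℤ) (k : Fin d → ℤ) :
    (∫⁻ x in dyC n k, g x ∂μ) / μ (dyC n k) * μ (dyC n k) ≤ ∫⁻ x in dyC n k, g x ∂μ := by
  rcases eq_or_ne (μ (dyC n k)) 0 with h0 | h0
  · rw [h0, mul_zero]; exact zero_le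
  · rw [ENNReal.div_mul_cancel h0 (measure_dyC_lt_top μ n k).ne]

lemma key_decomp {d : ℕ} (μ : Measure (Rd d)) [IsLocallyFiniteMeasure μ]
    (a : ℤ × (Fin d → ℤ) → ℝ≥0∞) (C : ℝ≥0∞)
    (hCarl : ∀ q : ℤ × (Fin d → ℤ),
      ∑' p : {p : ℤ × (Fin d → ℤ) // dyC p.1 p.2 ⊆ dyC q.1 q.2}, a p
        ≤ C * μ (dyC q.1 q.2))
    (g : Rd d → ℝ≥0∞) (lam : ℝ≥0∞)
    (G : Finset (ℤ × (Fin d → ℤ))) :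
    (∀ p ∈ G, lam < (∫⁻ x in dyC p.1 p.2, g x ∂μ) / μ (dyC p.1 p.2)) →
    (∑ p ∈ G, a p ≤ C * μ (⋃ p ∈ G, dyC p.1 p.2)) ∧
    lam * μ (⋃ p ∈ G, dyC p.1 p.2) ≤ ∫⁻ x in (⋃ p ∈ G, dyC p.1 p.2), g x ∂μ := by
  classical
  induction G using Finset.strongInduction with
  | _ G IH =>
    intro hG
    rcases G.eq_empty_or_nonempty with rfl | hne
    · simp
    obtain ⟨q, hqG, hqmax⟩ := G.exists_max_image (fun p => p.1) hne
    set G1 := G.filter (fun p => dyC p.1 p.2 ⊆ dyC q.1 q.2) with hG1def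
    set G2 := G.filter (fun p => ¬ dyC p.1 p.2 ⊆ dyC q.1 q.2) with hG2def
    have hq1 : q ∈ G1 := by
      rw [hG1def, Finset.mem_filter]; exact ⟨hqG, subset_rfl⟩
    have hqn2 : q ∉ G2 := by
      rw [hG2def, Finset.mem_filter]; push_neg; intro _; exact subset_rfl
    have hG2sub : G2 ⊂ G := by
      refine ⟨Finset.filter_subset _ _, fun hsub => hqn2 (hsub hqG)⟩
    have hdisj : ∀ p ∈ G2, Disjoint (dyC p.1 p.2) (dyC q.1 q.2) := by
      intro p hp
      rw [hG2def, Finset.mem_filter] at hp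
      rw [Set.disjoint_iff_inter_eq_empty]
      by_contra hcon
      exact hp.2 (dyC_nested (hqmax p hp.1) (Set.nonempty_iff_ne_empty.mpr hcon))
    -- union decomposition
    have hU1 : (⋃ p ∈ G1, dyC p.1 p.2) = dyC q.1 q.2 := by
      apply Set.Subset.antisymm
      · apply Set.iUnion₂_subset
        intro p hp
        rw [hG1def, Finset.mem_filter] at hp
        exact hp.2
      · exact Set.subset_iUnion₂ (s := fun p _ => dyC p.1 p.2) q hq1
    have hUsplit : (⋃ p ∈ G, dyC p.1 p.2) = dyC q.1 q.2 ∪ ⋃ p ∈ G2, dyC p.1 p.2 := by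
      rw [← hU1]
      ext x
      simp only [Set.mem_iUnion, Set.mem_union]
      constructor
      · rintro ⟨p, hp, hx⟩
        by_cases hc : dyC p.1 p.2 ⊆ dyC q.1 q.2
        · exact Or.inl ⟨p, by rw [hG1def, Finset.mem_filter]; exact ⟨hp, hc⟩, hx⟩
        · exact Or.inr ⟨p, by rw [hG2def, Finset.mem_filter]; exact ⟨hp, hc⟩, hx⟩
      · rintro (⟨p, hp, hx⟩ | ⟨p, hp, hx⟩)
        · exact ⟨p, Finset.mem_of_mem_filter p hp, hx⟩
        · exact ⟨p, Finset.mem_of_mem_filter p hp, hx⟩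
    have hmeas2 : MeasurableSet (⋃ p ∈ G2, dyC p.1 p.2) :=
      MeasurableSet.biUnion G2.countable_toSet (fun p _ => measurableSet_dyC p.1 p.2)
    have hdisjU : Disjoint (dyC q.1 q.2) (⋃ p ∈ G2, dyC p.1 p.2) := by
      rw [Set.disjoint_iUnion₂_right]
      intro p hp
      exact (hdisj p hp).symm
    have hmeasadd : μ (⋃ p ∈ G, dyC p.1 p.2) = μ (dyC q.1 q.2) + μ (⋃ p ∈ G2, dyC p.1 p.2) := by
    

      rw [hUsplit, measure_union hdisjU hmeas2]
    have hIH := IH G2 hG2sub (fun p hp => hG p (Finset.mem_of_mem_filter p hp))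
    constructor
    · -- sum bound
      have hsum_split : ∑ p ∈ G, a p = ∑ p ∈ G1, a p + ∑ p ∈ G2, a p := by
        rw [hG1def, hG2def]
        exact (Finset.sum_filter_add_sum_filter_not G _ a).symm
      have h1 : ∑ p ∈ G1, a p ≤ C * μ (dyC q.1 q.2) := by
        refine le_trans ?_ (hCarl q)
        have : ∑ p ∈ G1, a p
            = ∑ p ∈ G1, Set.indicator {p : ℤ × (Fin d → ℤ) | dyC p.1 p.2 ⊆ dyC q.1 q.2} a p := by
          apply Finset.sum_congr rfl
          intro p hp
          rw [hG1def, Finset.mem_filter] at hp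
          exact (Set.indicator_of_mem (s := {p : ℤ × (Fin d → ℤ) | dyC p.1 p.2 ⊆ dyC q.1 q.2}) hp.2 a).symm
        rw [show (∑' p : {p : ℤ × (Fin d → ℤ) // dyC p.1 p.2 ⊆ dyC q.1 q.2}, a p)
            = ∑' p, Set.indicator {p : ℤ × (Fin d → ℤ) | dyC p.1 p.2 ⊆ dyC q.1 q.2} a p
          from tsum_subtype _ a]
        exact le_trans (le_of_eq this) (ENNReal.sum_le_tsum G1)
      calc ∑ p ∈ G, a p = ∑ p ∈ G1, a p + ∑ p ∈ G2, a p := hsum_split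
        _ ≤ C * μ (dyC q.1 q.2) + C * μ (⋃ p ∈ G2, dyC p.1 p.2) := add_le_add h1 hIH.1
        _ = C * μ (⋃ p ∈ G, dyC p.1 p.2) := by rw [hmeasadd, mul_add]
    · -- measure bound
      have hq : lam * μ (dyC q.1 q.2) ≤ ∫⁻ x in dyC q.1 q.2, g x ∂μ := by
        refine le_trans ?_ (avg_mul_measure_le μ g q.1 q.2)
        exact mul_le_mul_left (le_of_lt (hG q hqG)) _
      calc lam * μ (⋃ p ∈ G, dyC p.1 p.2)
          = lam * μ (dyC q.1 q.2) + lam * μ (⋃ p ∈ G2, dyC p.1 p.2) := by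
            rw [hmeasadd, mul_add]
        _ ≤ (∫⁻ x in dyC q.1 q.2, g x ∂μ) + ∫⁻ x in (⋃ p ∈ G2, dyC p.1 p.2), g x ∂μ :=
            add_le_add hq hIH.2
        _ = ∫⁻ x in (⋃ p ∈ G, dyC p.1 p.2), g x ∂μ := by
            rw [hUsplit, lintegral_union hmeas2 hdisjU]


lemma measurable_finset_sup {δ : Type*} [MeasurableSpace δ] {ι : Type*} (F : Finset ι)
    (h : ι → δ → ℝ≥0∞) (hm : ∀ p, Measurable (h p)) :
    Measurable (fun x => F.sup (fun p => h p x)) := by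
  classical
  induction F using Finset.induction with
  | empty => simpa using measurable_const
  | insert _ _ hni ih =>
    simp only [Finset.sup_insert]
    exact (hm _).sup ih

lemma conj22 : Real.HolderConjugate 2 2 := Real.HolderConjugate.two_two

/-- Hölder: set lintegral of g is finite. -/
lemma setLintegral_lt_top {α : Type*} [MeasurableSpace α] (μ : Measure α) {s : Set α}
    (hs : MeasurableSet s) (hμs : μ s ≠ ∞) (g : α → ℝ≥0∞) (hg : Measurable g)
    (hg2 : ∫⁻ x, g x ^ 2 ∂μ ≠ ∞) : ∫⁻ x in s, g x ∂μ ≠ ∞ := by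
  have h := ENNReal.lintegral_mul_le_Lp_mul_Lq (μ.restrict s) conj22
    hg.aemeasurable (measurable_const (a := (1:ℝ≥0∞))).aemeasurable
  simp only [Pi.mul_apply, mul_one, ENNReal.one_rpow, lintegral_const, one_mul,
    Measure.restrict_apply MeasurableSet.univ, Set.univ_inter] at h
  refine ne_top_of_le_ne_top ?_ h
  apply ENNReal.mul_ne_top
  · have : ∫⁻ x in s, g x ^ (2:ℝ) ∂μ ≤ ∫⁻ x, g x ^ (2:ℝ) ∂μ :=
      setLIntegral_le_lintegral s _
    refine ENNReal.rpow_ne_top_of_nonneg (by norm_num) ?_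
    refine ne_top_of_le_ne_top ?_ this
    simpa [ENNReal.rpow_two] using hg2
  · exact ENNReal.rpow_ne_top_of_nonneg (by norm_num) hμs

theorem main_finset {d : ℕ} (μ : Measure (Rd d)) [IsLocallyFiniteMeasure μ]
    (a : ℤ × (Fin d → ℤ) → ℝ≥0∞) (C : ℝ≥0∞)
    (hCarl : ∀ q : ℤ × (Fin d → ℤ),
      ∑' p : {p : ℤ × (Fin d → ℤ) // dyC p.1 p.2 ⊆ dyC q.1 q.2}, a p
        ≤ C * μ (dyC q.1 q.2))
    (g : Rd d → ℝ≥0∞) (hg : Measurable g) (hg2 : ∫⁻ x, g x ^ 2 ∂μ ≠ ∞)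
    (F : Finset (ℤ × (Fin d → ℤ))) :
    ∑ p ∈ F, ((∫⁻ x in dyC p.1 p.2, g x ∂μ) / μ (dyC p.1 p.2)) ^ 2 * a p
      ≤ 4 * C * ∫⁻ x, g x ^ 2 ∂μ := by
  classical
  haveI : SigmaFinite μ := inferInstance
  set ν : Measure ℝ := volume.restrict (Ioi (0:ℝ)) with hν
  set avg : ℤ × (Fin d → ℤ) → ℝ≥0∞ :=
    fun p => (∫⁻ x in dyC p.1 p.2, g x ∂μ) / μ (dyC p.1 p.2) with havg
  have havgfin : ∀ p, avg p ≠ ∞ := by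
    intro p
    rcases eq_or_ne (μ (dyC p.1 p.2)) 0 with h0 | h0
    · have : ∫⁻ x in dyC p.1 p.2, g x ∂μ = 0 := by
        rw [setLIntegral_measure_zero _ _ h0]
      simp [havg, this]
    · exact (ENNReal.div_lt_top
        (setLintegral_lt_top μ (measurableSet_dyC p.1 p.2) (measure_dyC_lt_top μ p.1 p.2).ne g hg hg2) h0).ne
  set B : Rd d → ℝ≥0∞ :=
    fun x => F.sup (fun p => (dyC p.1 p.2).indicator (fun _ => avg p) x) with hB
  have hBmeas : Measurable B :=
    measurable_finset_sup F _ (fun p => measurable_const.indicator (measurableSet_dyC p.1 p.2))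
  have hBfin : ∀ x, B x ≠ ∞ := by
    intro x
    refine ne_top_of_le_ne_top (b := F.sup avg) ?_ ?_
    · rw [← lt_top_iff_ne_top, Finset.sup_lt_iff (by simp : (⊥:ℝ≥0∞) < ⊤)]
      exact fun p _ => (havgfin p).lt_top
    · apply Finset.sup_mono_fun
      intro p _
      exact Set.indicator_le_self' (fun _ _ => zero_le) x
  have hlevel : ∀ lam : ℝ≥0∞, {x | lam < B x}
      = ⋃ p ∈ F.filter (fun p => lam < avg p), dyC p.1 p.2 := by
    intro lam
    ext x
    simp only [Set.mem_setOf_eq, Set.mem_iUnion, Finset.mem_filter, exists_prop, hB]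
    rw [Finset.lt_sup_iff]
    constructor
    · rintro ⟨p, hpF, hlt⟩
      by_cases hx : x ∈ dyC p.1 p.2
      · rw [Set.indicator_of_mem hx] at hlt
        exact ⟨p, ⟨hpF, hlt⟩, hx⟩
      · rw [Set.indicator_of_notMem hx] at hlt
        exact absurd hlt (by simp)
    · rintro ⟨p, ⟨hpF, hlt⟩, hx⟩
      exact ⟨p, hpF, by rw [Set.indicator_of_mem hx]; exact hlt⟩
  have hmeaslevel : ∀ lam : ℝ≥0∞, MeasurableSet {x | lam < B x} :=
    fun lam => measurableSet_lt measurable_const hBmeas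
  have hstep : ∀ lam : ℝ≥0∞,
      (∑ p ∈ F.filter (fun p => lam < avg p), a p ≤ C * μ {x | lam < B x}) ∧
      lam * μ {x | lam < B x} ≤ ∫⁻ x in {x | lam < B x}, g x ∂μ := by
    intro lam
    have h := key_decomp μ a C hCarl g lam (F.filter (fun p => lam < avg p))
      (fun p hp => (Finset.mem_filter.mp hp).2)
    rw [← hlevel lam] at h
    exact h
  -- the product-measurable kernel
  have hkermeas : ∀ (f : ℝ → ℝ≥0∞), Measurable f →
      Measurable (fun q : ℝ × Rd d => ({x | ENNReal.ofReal q.1 < B x}.indicator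
        (fun _ => f q.1) q.2)) := by
    intro f hf
    have hset : MeasurableSet {q : ℝ × Rd d | ENNReal.ofReal q.1 < B q.2} :=
      measurableSet_lt (ENNReal.measurable_ofReal.comp measurable_fst)
        (hBmeas.comp measurable_snd)
    have : (fun q : ℝ × Rd d => ({x | ENNReal.ofReal q.1 < B x}.indicator
        (fun _ => f q.1) q.2)) = fun q : ℝ × Rd d =>
          Set.indicator {q : ℝ × Rd d | ENNReal.ofReal q.1 < B q.2} (fun q => f q.1) q := by
      ext q
      by_cases hq : ENNReal.ofReal q.1 < B q.2
      · rw [Set.indicator_of_mem (by exact hq), Set.indicator_of_mem (by exact hq)]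
      · rw [Set.indicator_of_notMem (by exact hq), Set.indicator_of_notMem (by exact hq)]
    rw [this]
    exact (hf.comp measurable_fst).indicator hset
  -- swap lemma specialized
  have hswap : ∀ (f : ℝ → ℝ≥0∞) (hf : Measurable f),
      ∫⁻ t in Ioi (0:ℝ), (∫⁻ x, ({x | ENNReal.ofReal t < B x}.indicator (fun _ => f t) x) ∂μ) ∂volume
        = ∫⁻ x, ∫⁻ t in Ioi (0:ℝ), ({x | ENNReal.ofReal t < B x}.indicator (fun _ => f t) x) ∂volume ∂μ := by
    intro f hf
    exact lintegral_lintegral_swap ((hkermeas f hf).aemeasurable)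
  -- the two kernels
  set K : ℝ → Rd d → ℝ≥0∞ := fun t x => ({x | ENNReal.ofReal t < B x}.indicator
      (fun _ => g x) x) with hK
  set K2 : ℝ → Rd d → ℝ≥0∞ := fun t x => ({x | ENNReal.ofReal t < B x}.indicator
      (fun _ => ENNReal.ofReal t) x) with hK2
  have hKmeas : Measurable (Function.uncurry K) := by
    have hset : MeasurableSet {q : ℝ × Rd d | ENNReal.ofReal q.1 < B q.2} :=
      measurableSet_lt (ENNReal.measurable_ofReal.comp measurable_fst)
        (hBmeas.comp measurable_snd)
    have : Function.uncurry K = fun q : ℝ × Rd d =>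
        Set.indicator {q : ℝ × Rd d | ENNReal.ofReal q.1 < B q.2} (fun q => g q.2) q := by
      ext q
      rcases q with ⟨t, x⟩
      by_cases hq : ENNReal.ofReal t < B x
      · rw [Function.uncurry_apply_pair, hK]
        simp only []
        rw [Set.indicator_of_mem (by exact hq), Set.indicator_of_mem (by exact hq)]
      · rw [Function.uncurry_apply_pair, hK]
        simp only []
        rw [Set.indicator_of_notMem (by exact hq), Set.indicator_of_notMem (by exact hq)]
    rw [this]
    exact (hg.comp measurable_snd).indicator hset
  have hK2meas : Measurable (Function.uncurry K2) := by
    have hset : MeasurableSet {q : ℝ × Rd d | ENNReal.ofReal q.1 < B q.2} :=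
      measurableSet_lt (ENNReal.measurable_ofReal.comp measurable_fst)
        (hBmeas.comp measurable_snd)
    have : Function.uncurry K2 = fun q : ℝ × Rd d =>
        Set.indicator {q : ℝ × Rd d | ENNReal.ofReal q.1 < B q.2}
          (fun q => ENNReal.ofReal q.1) q := by
      ext q
      rcases q with ⟨t, x⟩
      by_cases hq : ENNReal.ofReal t < B x
      · rw [Function.uncurry_apply_pair, hK2]
        simp only []
        rw [Set.indicator_of_mem (by exact hq), Set.indicator_of_mem (by exact hq)]
      · rw [Function.uncurry_apply_pair, hK2]
        simp only []
        rw [Set.indicator_of_notMem (by exact hq), Set.indicator_of_notMem (by exact hq)]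
    rw [this]
    exact (ENNReal.measurable_ofReal.comp measurable_fst).indicator hset
  have hswapK : ∫⁻ t in Ioi (0:ℝ), (∫⁻ x, K t x ∂μ) ∂volume
      = ∫⁻ x, (∫⁻ t in Ioi (0:ℝ), K t x ∂volume) ∂μ :=
    lintegral_lintegral_swap hKmeas.aemeasurable
  have hswapK2 : ∫⁻ t in Ioi (0:ℝ), (∫⁻ x, K2 t x ∂μ) ∂volume
      = ∫⁻ x, (∫⁻ t in Ioi (0:ℝ), K2 t x ∂volume) ∂μ :=
    lintegral_lintegral_swap hK2meas.aemeasurable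
  -- inner t-integral of K
  have hinnerK : ∀ x, (∫⁻ t in Ioi (0:ℝ), K t x ∂volume) = g x * B x := by
    intro x
    have : ∀ t : ℝ, K t x = Set.indicator {t : ℝ | ENNReal.ofReal t < B x}
        (fun _ => g x) t := by
      intro t
      by_cases hq : ENNReal.ofReal t < B x
      · rw [hK]; simp only []
        rw [Set.indicator_of_mem (by exact hq), Set.indicator_of_mem (by exact hq)]
      · rw [hK]; simp only []
        rw [Set.indicator_of_notMem (by exact hq), Set.indicator_of_notMem (by exact hq)]
    calc (∫⁻ t in Ioi (0:ℝ), K t x ∂volume)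
        = ∫⁻ t in Ioi (0:ℝ), Set.indicator {t : ℝ | ENNReal.ofReal t < B x}
            (fun _ => g x) t ∂volume := by
          exact lintegral_congr (fun t => this t)
      _ = g x * (volume.restrict (Ioi (0:ℝ))) {t : ℝ | ENNReal.ofReal t < B x} :=
          lintegral_indicator_const (measurableSet_setof_lt (B x)) (g x)
      _ = g x * B x := by rw [meas_setof_lt (B x)]
  have hJ := ∫⁻ x, g x * B x ∂μ
  set J : ℝ≥0∞ := ∫⁻ x, g x * B x ∂μ with hJdef
  set G2 : ℝ≥0∞ := ∫⁻ x, g x ^ 2 ∂μ with hG2def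
  set A : ℝ≥0∞ := ∫⁻ x, B x ^ 2 ∂μ with hAdef
  -- x-integral of K bound via hstep
  have hxK : ∀ t : ℝ, ENNReal.ofReal t * μ {x | ENNReal.ofReal t < B x}
      ≤ ∫⁻ x, K t x ∂μ := by
    intro t
    refine le_trans (hstep (ENNReal.ofReal t)).2 ?_
    rw [← lintegral_indicator (hmeaslevel (ENNReal.ofReal t))]
    exact le_of_eq rfl
  -- x-integral of K2
  have hxK2 : ∀ t : ℝ, (∫⁻ x, K2 t x ∂μ)
      = ENNReal.ofReal t * μ {x | ENNReal.ofReal t < B x} := by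
    intro t
    exact lintegral_indicator_const (hmeaslevel (ENNReal.ofReal t)) (ENNReal.ofReal t)
  have hKintmeas : Measurable (fun t : ℝ => ∫⁻ x, K t x ∂μ) :=
    Measurable.lintegral_prod_right hKmeas
  have hK2xintmeas : Measurable (fun x : Rd d => ∫⁻ t in Ioi (0:ℝ), K2 t x ∂volume) :=
    Measurable.lintegral_prod_left hK2meas
  -- Chain 1 : LHS ≤ 2 * C * J
  have chain1 : ∑ p ∈ F, avg p ^ 2 * a p ≤ 2 * C * J := by
    have e1 : ∀ p, avg p ^ 2 * a p = 2 * ∫⁻ t in Ioi (0:ℝ),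
        ({t : ℝ | ENNReal.ofReal t < avg p}.indicator ENNReal.ofReal) t * a p ∂volume := by
      intro p
      rw [sq_eq_two_lintegral (avg p) (havgfin p)]
      rw [lintegral_mul_const _ (ENNReal.measurable_ofReal.indicator (measurableSet_setof_lt (avg p)))]
      ring
    calc ∑ p ∈ F, avg p ^ 2 * a p
        = 2 * ∑ p ∈ F, ∫⁻ t in Ioi (0:ℝ),
            ({t : ℝ | ENNReal.ofReal t < avg p}.indicator ENNReal.ofReal) t * a p ∂volume := by
          rw [Finset.mul_sum]
          exact Finset.sum_congr rfl (fun p _ => e1 p)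
      _ = 2 * ∫⁻ t in Ioi (0:ℝ), ∑ p ∈ F,
            ({t : ℝ | ENNReal.ofReal t < avg p}.indicator ENNReal.ofReal) t * a p ∂volume := by
          rw [lintegral_finset_sum]
          intro p _
          exact (ENNReal.measurable_ofReal.indicator (measurableSet_setof_lt (avg p))).mul_const _
      _ ≤ 2 * ∫⁻ t in Ioi (0:ℝ), C * ∫⁻ x, K t x ∂μ ∂volume := by
          refine mul_le_mul_right (lintegral_mono (fun t => ?_)) 2
          have hsum : ∑ p ∈ F, ({t : ℝ | ENNReal.ofReal t < avg p}.indicator ENNReal.ofReal) t * a p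
              = ENNReal.ofReal t * ∑ p ∈ F.filter (fun p => ENNReal.ofReal t < avg p), a p := by
            rw [Finset.mul_sum, Finset.sum_filter]
            apply Finset.sum_congr rfl
            intro p _
            by_cases hp : ENNReal.ofReal t < avg p
            · rw [Set.indicator_of_mem (by exact hp), if_pos hp]
            · rw [Set.indicator_of_notMem (by exact hp), if_neg hp, zero_mul]
          rw [hsum]
          calc ENNReal.ofReal t * ∑ p ∈ F.filter (fun p => ENNReal.ofReal t < avg p), a p
              ≤ ENNReal.ofReal t * (C * μ {x | ENNReal.ofReal t < B x}) :=
                mul_le_mul_right (hstep (ENNReal.ofReal t)).1 _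
            _ = C * (ENNReal.ofReal t * μ {x | ENNReal.ofReal t < B x}) := by ring
            _ ≤ C * ∫⁻ x, K t x ∂μ := mul_le_mul_right (hxK t) C
      _ = 2 * (C * ∫⁻ t in Ioi (0:ℝ), ∫⁻ x, K t x ∂μ ∂volume) := by
          rw [lintegral_const_mul C hKintmeas]
      _ = 2 * C * J := by
          rw [hswapK]
          rw [lintegral_congr hinnerK]
          ring
  -- Chain 2 : A ≤ 2 * J
  have chain2 : A ≤ 2 * J := by
    have e2 : ∀ x, B x ^ 2 = 2 * ∫⁻ t in Ioi (0:ℝ), K2 t x ∂volume := by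
      intro x
      rw [sq_eq_two_lintegral (B x) (hBfin x)]
      have ht : ∀ t : ℝ, ({t : ℝ | ENNReal.ofReal t < B x}.indicator ENNReal.ofReal) t
          = K2 t x := by
        intro t
        by_cases hq : ENNReal.ofReal t < B x
        · rw [hK2]; simp only []
          rw [Set.indicator_of_mem (by exact hq), Set.indicator_of_mem (by exact hq)]
        · rw [hK2]; simp only []
          rw [Set.indicator_of_notMem (by exact hq), Set.indicator_of_notMem (by exact hq)]
      rw [lintegral_congr ht]
    calc A = ∫⁻ x, 2 * ∫⁻ t in Ioi (0:ℝ), K2 t x ∂volume ∂μ := lintegral_congr e2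
      _ = 2 * ∫⁻ x, ∫⁻ t in Ioi (0:ℝ), K2 t x ∂volume ∂μ :=
          lintegral_const_mul 2 hK2xintmeas
      _ = 2 * ∫⁻ t in Ioi (0:ℝ), ∫⁻ x, K2 t x ∂μ ∂volume := by rw [hswapK2]
      _ ≤ 2 * ∫⁻ t in Ioi (0:ℝ), ∫⁻ x, K t x ∂μ ∂volume := by
          refine mul_le_mul_right (lintegral_mono (fun t => ?_)) 2
          rw [hxK2 t]
          exact hxK t
      _ = 2 * J := by rw [hswapK, lintegral_congr hinnerK]
  -- Chain 3 : J ≤ G2 ^ (1/2) * A ^ (1/2)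
  have chain3 : J ≤ G2 ^ (1/2 : ℝ) * A ^ (1/2 : ℝ) := by
    have h := ENNReal.lintegral_mul_le_Lp_mul_Lq μ conj22 hg.aemeasurable hBmeas.aemeasurable
    simp only [Pi.mul_apply] at h
    calc J ≤ (∫⁻ x, g x ^ (2:ℝ) ∂μ) ^ (1/(2:ℝ)) * (∫⁻ x, B x ^ (2:ℝ) ∂μ) ^ (1/(2:ℝ)) := h
      _ = G2 ^ (1/2 : ℝ) * A ^ (1/2 : ℝ) := by
          rw [hG2def, hAdef]
          congr 1 <;> · congr 1; apply lintegral_congr; intro x; rw [ENNReal.rpow_two]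
  -- Chain 4 : A ≠ ∞
  have chain4 : A ≠ ∞ := by
    set c0 : ℝ≥0∞ := F.sup avg with hc0
    have hc0fin : c0 ≠ ∞ := by
      rw [← lt_top_iff_ne_top, hc0, Finset.sup_lt_iff (by simp : (⊥:ℝ≥0∞) < ⊤)]
      exact fun p _ => (havgfin p).lt_top
    set V : Set (Rd d) := ⋃ p ∈ F, dyC p.1 p.2 with hV
    have hVmeas : MeasurableSet V :=
      MeasurableSet.biUnion F.countable_toSet (fun p _ => measurableSet_dyC p.1 p.2)
    have hVfin : μ V ≠ ∞ := by
      refine ne_top_of_le_ne_top ?_ (measure_biUnion_finset_le F _)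
      rw [← lt_top_iff_ne_top]
      exact ENNReal.sum_lt_top.mpr (fun p _ => measure_dyC_lt_top μ p.1 p.2)
    have hpt : ∀ x, B x ^ 2 ≤ V.indicator (fun _ => c0 ^ 2) x := by
      intro x
      by_cases hx : x ∈ V
      · rw [Set.indicator_of_mem hx]
        refine pow_le_pow_left' ?_ 2
        apply Finset.sup_mono_fun
        intro p _
        exact Set.indicator_le_self' (fun _ _ => zero_le) x
      · rw [Set.indicator_of_notMem hx]
        have : B x = 0 := by
          rw [hB]
          refine le_antisymm ?_ (zero_le)
          apply Finset.sup_le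
          intro p hp
          rw [Set.indicator_of_notMem]
          intro hmem
          exact hx (Set.mem_biUnion hp hmem)
        rw [this]
        simp
    have hle : A ≤ c0 ^ 2 * μ V :=
      le_trans (lintegral_mono hpt) (le_of_eq (lintegral_indicator_const hVmeas _))
    exact ne_top_of_le_ne_top
      (ENNReal.mul_ne_top (ENNReal.pow_lt_top hc0fin.lt_top).ne hVfin) hle
  -- conclude
  have hroot : A ^ (1/2 : ℝ) ≤ 2 * G2 ^ (1/2 : ℝ) := by
    rcases eq_or_ne A 0 with hA0 | hA0
    · rw [hA0, ENNReal.zero_rpow_of_pos (by norm_num)]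
      exact zero_le
    · have hAhalf0 : A ^ (1/2 : ℝ) ≠ 0 := by
        simp [ENNReal.rpow_eq_zero_iff, hA0, chain4]
      have hAhalftop : A ^ (1/2 : ℝ) ≠ ∞ := ENNReal.rpow_ne_top_of_nonneg (by norm_num) chain4
      have hAeq : A = A ^ (1/2 : ℝ) * A ^ (1/2 : ℝ) := by
        rw [← ENNReal.rpow_add _ _ hA0 chain4]
        norm_num
      have : A ^ (1/2 : ℝ) * A ^ (1/2 : ℝ) ≤ (2 * G2 ^ (1/2 : ℝ)) * A ^ (1/2 : ℝ) := by
        rw [← hAeq]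
        calc A ≤ 2 * J := chain2
          _ ≤ 2 * (G2 ^ (1/2 : ℝ) * A ^ (1/2 : ℝ)) := mul_le_mul_right chain3 2
          _ = (2 * G2 ^ (1/2 : ℝ)) * A ^ (1/2 : ℝ) := by ring
      exact (ENNReal.mul_le_mul_iff_left hAhalf0 hAhalftop).mp this
  have hGG : G2 ^ (1/2 : ℝ) * G2 ^ (1/2 : ℝ) = G2 := by
    rcases eq_or_ne G2 0 with h0 | h0
    · rw [h0, ENNReal.zero_rpow_of_pos (by norm_num), mul_zero]
    · rw [← ENNReal.rpow_add _ _ h0 hg2]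
      norm_num
  calc ∑ p ∈ F, avg p ^ 2 * a p ≤ 2 * C * J := chain1
    _ ≤ 2 * C * (G2 ^ (1/2 : ℝ) * A ^ (1/2 : ℝ)) := mul_le_mul_right chain3 _
    _ ≤ 2 * C * (G2 ^ (1/2 : ℝ) * (2 * G2 ^ (1/2 : ℝ))) := by
        exact mul_le_mul_right (mul_le_mul_right hroot _) _
    _ = 4 * C * (G2 ^ (1/2 : ℝ) * G2 ^ (1/2 : ℝ)) := by ring
    _ = 4 * C * G2 := by rw [hGG]

/-- Carleson embedding theorem: if `{a_I}` (indexed by dyadic cubes) satisfies the Carleson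
condition `∑_{I' ⊆ I} a_{I'} ≤ C μ(I)` for all dyadic `I`, then for every `φ ∈ L²(μ)`,
`∑_I |⟨φ⟩_{μ,I}|² a_I ≤ 4 C ‖φ‖_{L²(μ)}²`. Averages over cubes with `μ(I) = 0`
(or `μ(I) = ∞`) are interpreted as `0`. -/
theorem stmt9 {d : ℕ} (hd : 0 < d) (μ : Measure (Rd d)) [IsLocallyFiniteMeasure μ]
    (a : ℤ × (Fin d → ℤ) → ℝ≥0∞) (C : ℝ≥0∞)
    (hCarl : ∀ q : ℤ × (Fin d → ℤ),
      ∑' p : {p : ℤ × (Fin d → ℤ) // dyC p.1 p.2 ⊆ dyC q.1 q.2}, a p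
        ≤ C * μ (dyC q.1 q.2))
    (φ : Rd d → ℝ) (hφ : MemLp φ 2 μ) :
    ∑' p : ℤ × (Fin d → ℤ),
        ENNReal.ofReal (((∫ x in dyC p.1 p.2, φ x ∂μ) / (μ (dyC p.1 p.2)).toReal) ^ 2) * a p
      ≤ 4 * C * eLpNorm φ 2 μ ^ 2 := by
  classical
  have hae : AEMeasurable (fun x => (‖φ x‖₊ : ℝ≥0∞)) μ := hφ.1.enorm
  set g : Rd d → ℝ≥0∞ := hae.mk _ with hgdef
  have hgmeas : Measurable g := hae.measurable_mk
  have hgae : (fun x => (‖φ x‖₊ : ℝ≥0∞)) =ᵐ[μ] g := hae.ae_eq_mk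
  -- eLpNorm identity
  have hsn : eLpNorm φ 2 μ ^ 2 = ∫⁻ x, g x ^ 2 ∂μ := by
    rw [eLpNorm_eq_lintegral_rpow_enorm_toReal (by norm_num) (by norm_num)]
    simp only [enorm_eq_nnnorm]
    have h2 : ((2:ℝ≥0∞)).toReal = (2:ℝ) := by norm_num
    rw [h2]
    have hcong : ∫⁻ x, (‖φ x‖₊ : ℝ≥0∞) ^ (2:ℝ) ∂μ = ∫⁻ x, g x ^ 2 ∂μ := by
      apply lintegral_congr_ae
      filter_upwards [hgae] with x hx
      rw [hx, ENNReal.rpow_two]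
    rw [hcong]
    rw [← ENNReal.rpow_natCast ((∫⁻ x, g x ^ 2 ∂μ) ^ (1/(2:ℝ))) 2, ← ENNReal.rpow_mul]
    norm_num
  have hg2 : ∫⁻ x, g x ^ 2 ∂μ ≠ ∞ := by
    rw [← hsn]
    exact (ENNReal.pow_lt_top hφ.2).ne
  -- pointwise term bound
  have hterm : ∀ p : ℤ × (Fin d → ℤ),
      ENNReal.ofReal (((∫ x in dyC p.1 p.2, φ x ∂μ) / (μ (dyC p.1 p.2)).toReal) ^ 2)
        ≤ ((∫⁻ x in dyC p.1 p.2, g x ∂μ) / μ (dyC p.1 p.2)) ^ 2 := by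
    intro p
    set S := dyC p.1 p.2 with hS
    rcases eq_or_ne (μ S) 0 with h0 | h0
    · have hres : μ.restrict S = 0 := Measure.restrict_eq_zero.mpr h0
      rw [hres]
      simp
    · have hfin : μ S ≠ ∞ := (measure_dyC_lt_top μ p.1 p.2).ne
      have ht0 : 0 < (μ S).toReal := ENNReal.toReal_pos h0 hfin
      haveI : IsFiniteMeasure (μ.restrict S) :=
        ⟨by rw [Measure.restrict_apply_univ]; exact (measure_dyC_lt_top μ p.1 p.2)⟩
      have hint : Integrable φ (μ.restrict S) :=
        (hφ.restrict S).integrable (by norm_num)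
      set r : ℝ := ∫ x in S, φ x ∂μ with hr
      have habs : ENNReal.ofReal |r| ≤ ∫⁻ x in S, g x ∂μ := by
        have h1 : |r| ≤ ∫ x in S, ‖φ x‖ ∂μ := by
          rw [hr]
          exact norm_integral_le_integral_norm φ
        have h2 : ENNReal.ofReal (∫ x in S, ‖φ x‖ ∂μ) = ∫⁻ x in S, (‖φ x‖₊ : ℝ≥0∞) ∂μ :=
          ofReal_integral_norm_eq_lintegral_enorm hint
        have h3 : ∫⁻ x in S, (‖φ x‖₊ : ℝ≥0∞) ∂μ = ∫⁻ x in S, g x ∂μ :=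
          lintegral_congr_ae (ae_restrict_of_ae hgae)
        calc ENNReal.ofReal |r| ≤ ENNReal.ofReal (∫ x in S, ‖φ x‖ ∂μ) :=
              ENNReal.ofReal_le_ofReal h1
          _ = ∫⁻ x in S, g x ∂μ := by rw [h2, h3]
      have hsq : (r / (μ S).toReal) ^ 2 = (|r| / (μ S).toReal) ^ 2 := by
        rw [div_pow, div_pow, sq_abs]
      rw [hsq]
      have hdivpos : 0 ≤ |r| / (μ S).toReal := by positivity
      rw [ENNReal.ofReal_pow hdivpos]
      refine pow_le_pow_left' ?_ 2
      rw [ENNReal.ofReal_div_of_pos ht0, ENNReal.ofReal_toReal hfin]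
      exact ENNReal.div_le_div_right habs _
  -- conclude via sup over finite sets
  rw [ENNReal.tsum_eq_iSup_sum]
  refine iSup_le ?_
  intro F
  calc ∑ p ∈ F, ENNReal.ofReal (((∫ x in dyC p.1 p.2, φ x ∂μ) / (μ (dyC p.1 p.2)).toReal) ^ 2) * a p
      ≤ ∑ p ∈ F, ((∫⁻ x in dyC p.1 p.2, g x ∂μ) / μ (dyC p.1 p.2)) ^ 2 * a p :=
        Finset.sum_le_sum (fun p _ => mul_le_mul_left (hterm p) (a p))
    _ ≤ 4 * C * ∫⁻ x, g x ^ 2 ∂μ := main_finset μ a C hCarl g hgmeas hg2 F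
    _ = 4 * C * eLpNorm φ 2 μ ^ 2 := by rw [hsn]
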